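/- Let R be a commutative ring and 0 → E → F → G → 0 a short exact sequence of finitely generated R-modules. If F is reflexive and G is torsion-free, then E is reflexive. -/
import Mathlib

open IsLocalizedModule LocalizedModule

section Aux

variable (R : Type*) [CommRing R] [IsDomain R]

/-- Clearing denominators: a functional on the localized module can be scaled back to `R`. -/
lemma aux_clear_denominators (M : Type*) [AddCommGroup M] [Module R M] [Module.Finite R M]
    (φ : LocalizedModule (nonZeroDivisors R) M →ₗ[FractionRing R] FractionRing R) :
    ∃ r : R, r ≠ 0 ∧ ∃ lam : M →ₗ[R] R, ∀ x : M,
      algebraMap R (FractionRing R) (lam x)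
        = r • φ (LocalizedModule.mkLinearMap (nonZeroDivisors R) M x) := by
  set K := FractionRing R
  set S := nonZeroDivisors R
  obtain ⟨n, v, hv⟩ := Module.Finite.exists_fin (R := R) (M := M)
  obtain ⟨b, hb⟩ := IsLocalization.exist_integer_multiples_of_finite (M := S) (S := K)
    (fun i : Fin n => φ (LocalizedModule.mkLinearMap S M (v i)))
  set ν : M →ₗ[R] K :=
    (b : R) • ((φ.restrictScalars R) ∘ₗ LocalizedModule.mkLinearMap S M) with hν
  have halg : Function.Injective (Algebra.linearMap R K) := IsFractionRing.injective R K
  have hmem : ∀ x : M, ν x ∈ LinearMap.range (Algebra.linearMap R K) := by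
    have hle : Submodule.span R (Set.range v)
        ≤ Submodule.comap ν (LinearMap.range (Algebra.linearMap R K)) := by
      rw [Submodule.span_le, Set.range_subset_iff]
      intro i
      obtain ⟨c, hc⟩ := hb i
      refine ⟨c, ?_⟩
      simpa [hν] using hc
    intro x
    have : x ∈ Submodule.span R (Set.range v) := hv ▸ Submodule.mem_top
    exact hle this
  refine ⟨(b : R), nonZeroDivisors.coe_ne_zero b,
    ((LinearEquiv.ofInjective (Algebra.linearMap R K) halg).symm.toLinearMap) ∘ₗ
      (ν.codRestrict _ hmem), fun x => ?_⟩
  have : (Algebra.linearMap R K)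
      (((LinearEquiv.ofInjective (Algebra.linearMap R K) halg).symm.toLinearMap ∘ₗ
        (ν.codRestrict _ hmem)) x) = ν x := by
    have h2 := (LinearEquiv.ofInjective (Algebra.linearMap R K) halg).apply_symm_apply
      ((ν.codRestrict _ hmem) x)
    have h3 : ((LinearEquiv.ofInjective (Algebra.linearMap R K) halg)
        ((LinearEquiv.ofInjective (Algebra.linearMap R K) halg).symm
          ((ν.codRestrict _ hmem) x)) : K) = ν x := by rw [h2]; rfl
    simpa using h3
  have hx2 : ν x = (b : R) • φ (LocalizedModule.mkLinearMap S M x) := by simp [hν]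
  exact this.trans hx2

/-- A finitely generated torsion-free module over a Noetherian domain is separated by its
linear functionals. -/
lemma aux_exists_dual_ne_zero (M : Type*) [AddCommGroup M] [Module R M] [Module.Finite R M]
    [NoZeroSMulDivisors R M] {m : M} (hm : m ≠ 0) : ∃ lam : M →ₗ[R] R, lam m ≠ 0 := by
  set K := FractionRing R
  set S := nonZeroDivisors R
  have hmk : LocalizedModule.mkLinearMap S M m ≠ 0 := by
    intro h
    obtain ⟨s, hs⟩ := (IsLocalizedModule.eq_zero_iff S (LocalizedModule.mkLinearMap S M)).mp h
    rcases smul_eq_zero.mp hs with h1 | h2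
    · exact nonZeroDivisors.coe_ne_zero s h1
    · exact hm h2
  have : ¬ (∀ φ : Module.Dual K (LocalizedModule S M),
      φ (LocalizedModule.mkLinearMap S M m) = 0) := by
    rw [Module.forall_dual_apply_eq_zero_iff K]
    exact hmk
  push_neg at this
  obtain ⟨φ, hφ⟩ := this
  obtain ⟨r, hr, lam, hlam⟩ := aux_clear_denominators R M φ
  refine ⟨lam, fun h0 => ?_⟩
  have := hlam m
  rw [h0, map_zero] at this
  have hr' : algebraMap R K r ≠ 0 := fun h => hr (IsFractionRing.injective R K (by simpa using h))
  have : algebraMap R K r * φ (LocalizedModule.mkLinearMap S M m) = 0 := by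
    rw [← Algebra.smul_def]; exact this.symm
  rcases mul_eq_zero.mp this with h | h
  · exact hr' h
  · exact hφ h

/-- Extension of functionals up to a nonzero scalar, along an injective map of finitely
generated modules. -/
lemma aux_exists_smul_extend (E F : Type*) [AddCommGroup E] [Module R E]
    [AddCommGroup F] [Module R F] [Module.Finite R F]
    (f : E →ₗ[R] F) (hf : Function.Injective f) (lam : E →ₗ[R] R) :
    ∃ r : R, r ≠ 0 ∧ ∃ mu : F →ₗ[R] R, ∀ e : E, mu (f e) = r * lam e := by
  set K := FractionRing R
  set S := nonZeroDivisors R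
  set mkE := LocalizedModule.mkLinearMap S E
  set mkF := LocalizedModule.mkLinearMap S F
  set fK : LocalizedModule S E →ₗ[K] LocalizedModule S F :=
    ((IsLocalizedModule.map S mkE mkF) f).extendScalarsOfIsLocalization S K with hfK
  have hfKinj : Function.Injective fK := by
    have := IsLocalizedModule.map_injective S mkE mkF f hf
    intro x y hxy
    exact this (by simpa [hfK] using hxy)
  set lamK : LocalizedModule S E →ₗ[K] K :=
    ((IsLocalizedModule.map S mkE (Algebra.linearMap R K)) lam).extendScalarsOfIsLocalization S K
    with hlamK
  obtain ⟨h, hh⟩ := fK.exists_leftInverse_of_injective (LinearMap.ker_eq_bot.mpr hfKinj)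
  obtain ⟨r, hr, mu, hmu⟩ := aux_clear_denominators R F (lamK ∘ₗ h)
  refine ⟨r, hr, mu, fun e => ?_⟩
  have h1 : mkF (f e) = fK (mkE e) := by
    simp [hfK]
  have h2 : h (fK (mkE e)) = mkE e := by
    have := LinearMap.congr_fun hh (mkE e)
    simpa using this
  have h3 : lamK (mkE e) = algebraMap R K (lam e) := by
    simp [hlamK]
  have := hmu (f e)
  rw [h1] at this
  simp only [LinearMap.comp_apply] at this
  rw [h2, h3, Algebra.smul_def, ← map_mul] at this
  exact IsFractionRing.injective R K this

end Aux

/-- Let `R` be a commutative Noetherian integral domain and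
`0 → E → F → G → 0` a short exact sequence of finitely generated `R`-modules.
If `F` is reflexive and `G` is torsion-free, then `E` is reflexive. -/
theorem reflexive_of_sub_of_torsionFree_quotient
    (R E F G : Type*) [CommRing R] [IsDomain R] [IsNoetherianRing R]
    [AddCommGroup E] [Module R E] [AddCommGroup F] [Module R F]
    [AddCommGroup G] [Module R G]
    [Module.Finite R E] [Module.Finite R F] [Module.Finite R G]
    (f : E →ₗ[R] F) (g : F →ₗ[R] G)
    (hf : Function.Injective f) (hg : Function.Surjective g)
    (hfg : LinearMap.range f = LinearMap.ker g)
    (hF : Module.IsReflexive R F) (hG : NoZeroSMulDivisors R G) :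
    Module.IsReflexive R E := by
  -- E is torsion-free
  have hEt : NoZeroSMulDivisors R E := by
    constructor
    intro r e hre
    by_cases hr : r = 0
    · exact Or.inl hr
    · refine Or.inr (hf ?_)
      have hDD : NoZeroSMulDivisors R (Module.Dual R (Module.Dual R F)) := by
        constructor
        intro c Φ hcΦ
        by_cases hc : c = 0
        · exact Or.inl hc
        · refine Or.inr (LinearMap.ext fun μ => ?_)
          have := LinearMap.congr_fun hcΦ μ
          simp only [LinearMap.smul_apply, smul_eq_mul, LinearMap.zero_apply] at this
          rcases mul_eq_zero.mp this with h | h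
          · exact absurd h hc
          · simpa using h
      have hFt : NoZeroSMulDivisors R F :=
        Function.Injective.noZeroSMulDivisors (Module.Dual.eval R F)
          (Module.bijective_dual_eval R F).injective (map_zero _) (fun c x => map_smul _ c x)
      have : r • f e = 0 := by rw [← map_smul, hre, map_zero]
      rcases smul_eq_zero.mp this with h | h
      · exact absurd h hr
      · simpa using h
  constructor
  rw [Function.Bijective]
  constructor
  · -- injectivity of the evaluation map
    rw [← LinearMap.ker_eq_bot (M := E)]
    rw [LinearMap.ker_eq_bot']
    intro e he
    by_contra hne
    obtain ⟨lam, hlam⟩ := aux_exists_dual_ne_zero R E hne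
    exact hlam (by simpa using LinearMap.congr_fun he lam)
  · -- surjectivity
    intro φ
    obtain ⟨x, hx⟩ := (Module.bijective_dual_eval R F).surjective (f.dualMap.dualMap φ)
    have hgx : g x = 0 := by
      by_contra hne
      obtain ⟨ν, hν⟩ := aux_exists_dual_ne_zero R G hne
      apply hν
      have h1 : ν (g x) = (Module.Dual.eval R F x) (g.dualMap ν) := rfl
      rw [h1, hx]
      have h2 : f.dualMap (g.dualMap ν) = 0 := by
        ext e
        have : f e ∈ LinearMap.ker g := hfg ▸ LinearMap.mem_range_self f e
        simp only [LinearMap.dualMap_apply, LinearMap.comp_apply, LinearMap.zero_apply]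
        rw [LinearMap.mem_ker.mp this, map_zero]
      show φ (f.dualMap (g.dualMap ν)) = 0
      rw [h2, map_zero]
    have hxr : x ∈ LinearMap.range f := hfg ▸ LinearMap.mem_ker.mpr hgx
    obtain ⟨e, rfl⟩ := hxr
    refine ⟨e, ?_⟩
    ext lam
    obtain ⟨r, hr, mu, hmu⟩ := aux_exists_smul_extend R E F f hf lam
    apply mul_left_cancel₀ hr
    have hkey : r • lam = f.dualMap mu := by
      ext e'
      simp [hmu e', mul_comm]
    calc r * (Module.Dual.eval R E e) lam
        = (Module.Dual.eval R E e) (r • lam) := by simp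
      _ = mu (f e) := by rw [hkey]; rfl
      _ = (Module.Dual.eval R F (f e)) mu := rfl
      _ = φ (f.dualMap mu) := by rw [hx]; rfl
      _ = φ (r • lam) := by rw [← hkey]
      _ = r * φ lam := by rw [map_smul]; rfl
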